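/- (Necessity part of the criterion for q > p > 1.) Let Ω ⊆ ℝⁿ be open, let q > p > 1, let C ≥ 0, and let μ be a nonnegative measure on Ω×Ω, locally finite outside the diagonal, such that for every u ∈ C^∞(Ω), ( ∫_Ω ∫_Ω |u(x) − u(y)|^q μ(dx,dy) )^{1/q} ≤ C · ( ∫_Ω |∇u|^p dx )^{1/p}. Then for every pair (F₁,F₂) of disjoint subsets of Ω that are closed in Ω, μ(F₁ × F₂)^{p/q} ≤ C^p · cap_p(F₁,F₂;Ω). -/

import Mathlib

open MeasureTheory Metric Set Filter
open scoped ENNReal Topology MeasureTheory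

noncomputable section

/-- The condenser `p`-capacity
`cap_p(F₁,F₂;Ω) = inf { ∫_Ω |∇u|^p : u ∈ C^∞(Ω), u ≥ 1 on F₁, u ≤ 0 on F₂ }`. -/
def condCap {n : ℕ} (p : ℝ) (F₁ F₂ Ω : Set (EuclideanSpace ℝ (Fin n))) : ℝ≥0∞ :=
  sInf {r : ℝ≥0∞ | ∃ u : EuclideanSpace ℝ (Fin n) → ℝ, ContDiffOn ℝ (⊤ : ℕ∞) u Ω ∧
    (∀ x ∈ F₁, 1 ≤ u x) ∧ (∀ x ∈ F₂, u x ≤ 0) ∧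
    r = ∫⁻ x in Ω, ENNReal.ofReal (‖fderiv ℝ u x‖ ^ p)}

/-- necessity, `q > p > 1`: if
`(∬_{Ω×Ω} |u(x)−u(y)|^q dμ)^{1/q} ≤ C·‖∇u‖_{L^p(Ω)}` for every `u ∈ C^∞(Ω)`, then
`μ(F₁×F₂)^{p/q} ≤ C^p·cap_p(F₁,F₂;Ω)` for all disjoint sets closed in `Ω`. -/
theorem stmt_14 (n : ℕ) (Ω : Set (EuclideanSpace ℝ (Fin n))) (hΩ : IsOpen Ω)
    (p q : ℝ) (hp : 1 < p) (hpq : p < q) (C : ℝ) (hC : 0 ≤ C)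
    (μ : Measure (EuclideanSpace ℝ (Fin n) × EuclideanSpace ℝ (Fin n)))
    -- `μ` is locally finite outside the diagonal
    (hloc : ∀ K : Set (EuclideanSpace ℝ (Fin n) × EuclideanSpace ℝ (Fin n)),
      IsCompact K → (∀ z ∈ K, z.1 ≠ z.2) → μ K < ⊤)
    (hineq : ∀ u : EuclideanSpace ℝ (Fin n) → ℝ, ContDiffOn ℝ (⊤ : ℕ∞) u Ω →
      (∫⁻ z in Ω ×ˢ Ω, ENNReal.ofReal (|u z.1 - u z.2| ^ q) ∂μ) ^ (1 / q) ≤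
        ENNReal.ofReal C *
          (∫⁻ x in Ω, ENNReal.ofReal (‖fderiv ℝ u x‖ ^ p)) ^ (1 / p)) :
    ∀ F₁ F₂ : Set (EuclideanSpace ℝ (Fin n)),
      F₁ ⊆ Ω → Ω ∩ closure F₁ ⊆ F₁ → F₂ ⊆ Ω → Ω ∩ closure F₂ ⊆ F₂ →
      Disjoint F₁ F₂ →
      μ (F₁ ×ˢ F₂) ^ (p / q) ≤ ENNReal.ofReal (C ^ p) * condCap p F₁ F₂ Ω := by
  intro F₁ F₂ hF₁Ω hF₁c hF₂Ω hF₂c hdisj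
  have hp0 : (0:ℝ) < p := lt_trans one_pos hp
  have hq0 : (0:ℝ) < q := lt_trans hp0 hpq
  have hF₁m : MeasurableSet F₁ := by
    have : F₁ = Ω ∩ closure F₁ :=
      Subset.antisymm (subset_inter hF₁Ω subset_closure) hF₁c
    rw [this]; exact hΩ.measurableSet.inter isClosed_closure.measurableSet
  have hF₂m : MeasurableSet F₂ := by
    have : F₂ = Ω ∩ closure F₂ :=
      Subset.antisymm (subset_inter hF₂Ω subset_closure) hF₂c
    rw [this]; exact hΩ.measurableSet.inter isClosed_closure.measurableSet
  have hsub : F₁ ×ˢ F₂ ⊆ Ω ×ˢ Ω := Set.prod_mono hF₁Ω hF₂Ω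
  -- key estimate for each admissible function
  have key : ∀ u : EuclideanSpace ℝ (Fin n) → ℝ, ContDiffOn ℝ (⊤ : ℕ∞) u Ω →
      (∀ x ∈ F₁, 1 ≤ u x) → (∀ x ∈ F₂, u x ≤ 0) →
      μ (F₁ ×ˢ F₂) ^ (p / q) ≤ ENNReal.ofReal (C ^ p) *
        ∫⁻ x in Ω, ENNReal.ofReal (‖fderiv ℝ u x‖ ^ p) := by
    intro u hu h1 h2
    have hμI : μ (F₁ ×ˢ F₂) ≤
        ∫⁻ z in Ω ×ˢ Ω, ENNReal.ofReal (|u z.1 - u z.2| ^ q) ∂μ := by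
      have h1le : ∀ᵐ z ∂(μ.restrict (F₁ ×ˢ F₂)),
          (1 : ℝ≥0∞) ≤ ENNReal.ofReal (|u z.1 - u z.2| ^ q) := by
        refine (ae_restrict_iff' (hF₁m.prod hF₂m)).2 (ae_of_all _ ?_)
        rintro ⟨x, y⟩ hz
        obtain ⟨hx, hy⟩ := hz
        have hx1 : 1 ≤ u x := h1 x hx
        have hy0 : u y ≤ 0 := h2 y hy
        have habs : (1:ℝ) ≤ |u x - u y| := by
          rw [abs_of_nonneg (by linarith)]; linarith
        calc (1 : ℝ≥0∞) = ENNReal.ofReal 1 := by simp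
          _ ≤ ENNReal.ofReal (|u x - u y| ^ q) :=
            ENNReal.ofReal_le_ofReal (Real.one_le_rpow habs hq0.le)
      calc μ (F₁ ×ˢ F₂) = ∫⁻ _ in F₁ ×ˢ F₂, 1 ∂μ := (setLIntegral_one _).symm
        _ ≤ ∫⁻ z in F₁ ×ˢ F₂, ENNReal.ofReal (|u z.1 - u z.2| ^ q) ∂μ :=
            lintegral_mono_ae h1le
        _ ≤ ∫⁻ z in Ω ×ˢ Ω, ENNReal.ofReal (|u z.1 - u z.2| ^ q) ∂μ :=
            lintegral_mono' (Measure.restrict_mono hsub le_rfl) le_rfl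
    have hμq : μ (F₁ ×ˢ F₂) ^ (1 / q) ≤
        ENNReal.ofReal C * (∫⁻ x in Ω, ENNReal.ofReal (‖fderiv ℝ u x‖ ^ p)) ^ (1 / p) :=
      le_trans (ENNReal.rpow_le_rpow hμI (by positivity)) (hineq u hu)
    have h3 := ENNReal.rpow_le_rpow hμq hp0.le
    rw [ENNReal.mul_rpow_of_nonneg _ _ hp0.le, ← ENNReal.rpow_mul, ← ENNReal.rpow_mul,
      one_div_mul_cancel hp0.ne', ENNReal.rpow_one,
      ENNReal.ofReal_rpow_of_nonneg hC hp0.le] at h3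
    have hexp : 1 / q * p = p / q := by ring
    rwa [hexp] at h3
  rcases eq_or_lt_of_le hC with hC0 | hCpos
  · -- case C = 0 : the measure of the off-diagonal part of Ω × Ω vanishes
    have hdiag : ∀ i : Fin n, ∀ᵐ z ∂(μ.restrict (Ω ×ˢ Ω)),
        (z.1 : EuclideanSpace ℝ (Fin n)) i = z.2 i := by
      intro i
      have hu : ContDiffOn ℝ (⊤ : ℕ∞) (fun x : EuclideanSpace ℝ (Fin n) => x i) Ω :=
        (EuclideanSpace.proj (𝕜 := ℝ) i).contDiff.contDiffOn
      have h := hineq _ hu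
      rw [← hC0, ENNReal.ofReal_zero, zero_mul] at h
      have hI0 : (∫⁻ z in Ω ×ˢ Ω,
          ENNReal.ofReal (|(z.1 : EuclideanSpace ℝ (Fin n)) i - z.2 i| ^ q) ∂μ) = 0 := by
        have h0 : (∫⁻ z in Ω ×ˢ Ω,
            ENNReal.ofReal (|(z.1 : EuclideanSpace ℝ (Fin n)) i - z.2 i| ^ q) ∂μ) ^ (1/q) = 0 :=
          le_antisymm h zero_le
        rcases ENNReal.rpow_eq_zero_iff.1 h0 with ⟨h', _⟩ | ⟨_, h'⟩
        · exact h'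
        · exfalso
          have h6 : (0:ℝ) < 1/q := by positivity
          linarith
      have hmeas : Measurable (fun z : EuclideanSpace ℝ (Fin n) × EuclideanSpace ℝ (Fin n) =>
          ENNReal.ofReal (|(z.1 : EuclideanSpace ℝ (Fin n)) i - z.2 i| ^ q)) := by
        apply ENNReal.measurable_ofReal.comp
        have hc : Continuous (fun z : EuclideanSpace ℝ (Fin n) × EuclideanSpace ℝ (Fin n) =>
            |(z.1 : EuclideanSpace ℝ (Fin n)) i - z.2 i|) :=
          (((EuclideanSpace.proj (𝕜 := ℝ) i).continuous.comp continuous_fst).sub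
            ((EuclideanSpace.proj (𝕜 := ℝ) i).continuous.comp continuous_snd)).abs
        exact (hc.rpow_const (fun x => Or.inr hq0.le)).measurable
      have hae := (lintegral_eq_zero_iff hmeas).1 hI0
      filter_upwards [hae] with z hz
      have hz' : ENNReal.ofReal (|(z.1 : EuclideanSpace ℝ (Fin n)) i - z.2 i| ^ q) = 0 := hz
      rw [ENNReal.ofReal_eq_zero] at hz'
      have hnn : (0:ℝ) ≤ |(z.1 : EuclideanSpace ℝ (Fin n)) i - z.2 i| ^ q :=
        Real.rpow_nonneg (abs_nonneg _) _
      have h4 : |(z.1 : EuclideanSpace ℝ (Fin n)) i - z.2 i| ^ q = 0 := le_antisymm hz' hnn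
      have h5 := ((Real.rpow_eq_zero_iff_of_nonneg (abs_nonneg _)).1 h4).1
      have := abs_eq_zero.1 h5
      linarith [sub_eq_zero.1 this, (sub_eq_zero.1 this).le]
    have hae : ∀ᵐ z ∂(μ.restrict (Ω ×ˢ Ω)),
        (z.1 : EuclideanSpace ℝ (Fin n)) = z.2 := by
      filter_upwards [ae_all_iff.2 hdiag] with z hz
      exact PiLp.ext hz
    have hne : F₁ ×ˢ F₂ ⊆ {z : EuclideanSpace ℝ (Fin n) × EuclideanSpace ℝ (Fin n) |
        ¬ z.1 = z.2} := by
      rintro ⟨x, y⟩ ⟨hx, hy⟩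
      exact hdisj.ne_of_mem hx hy
    have h0 : μ (F₁ ×ˢ F₂) = 0 := by
      have := measure_mono_null hne (ae_iff.1 hae)
      rwa [Measure.restrict_apply' (hΩ.measurableSet.prod hΩ.measurableSet),
        inter_eq_self_of_subset_left hsub] at this
    rw [h0, ENNReal.zero_rpow_of_pos (by positivity)]
    exact zero_le
  · -- case C > 0
    have hc0 : ENNReal.ofReal (C ^ p) ≠ 0 := by
      simp only [ne_eq, ENNReal.ofReal_eq_zero, not_le]; positivity
    have hct : ENNReal.ofReal (C ^ p) ≠ ⊤ := ENNReal.ofReal_ne_top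
    rw [condCap, mul_comm, ← ENNReal.div_le_iff_le_mul (Or.inl hc0) (Or.inl hct)]
    refine le_sInf ?_
    rintro r ⟨u, hu, h1, h2, rfl⟩
    rw [ENNReal.div_le_iff_le_mul (Or.inl hc0) (Or.inl hct), mul_comm]
    exact key u hu h1 h2
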